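/- Let n ≥ 4 and suppose A ∈ S_L(K_{1,n−1}) has multiset of eigenvalues {0, λ^{(n−2)}, μ} with 0 < λ < μ (i.e., ordered multiplicity list (1, n−2, 1)). Then A = λL, where L is the combinatorial Laplacian matrix of K_{1,n−1}, and moreover μ = λn, so the spectrum of A is {0, λ^{(n−2)}, λn}. -/

import Mathlib

open Matrix

section AuxLemmas
open Polynomial

lemma charpoly_conj_aux {n : ℕ} (U V B : Matrix (Fin n) (Fin n) ℝ)
    (hUV : U * V = 1) (hVU : V * U = 1) : (U * B * V).charpoly = B.charpoly := by
  have C' := (C : ℝ →+* ℝ[X]).mapMatrix (m := Fin n)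
  have h1 : charmatrix (U * B * V) =
      (C : ℝ →+* ℝ[X]).mapMatrix U * charmatrix B * (C : ℝ →+* ℝ[X]).mapMatrix V := by
    unfold charmatrix
    rw [mul_sub, sub_mul]
    congr 1
    · rw [mul_assoc, (scalar_commute (X : ℝ[X]) (Commute.all X) (C.mapMatrix V)).eq,
        ← mul_assoc, ← RingHom.map_mul, hUV, RingHom.map_one, one_mul]
    · rw [← _root_.map_mul, ← _root_.map_mul]
  have h2 : (C : ℝ →+* ℝ[X]).mapMatrix V * (C : ℝ →+* ℝ[X]).mapMatrix U = 1 := by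
    rw [← RingHom.map_mul, hVU, RingHom.map_one]
  unfold Matrix.charpoly
  rw [h1, det_mul, det_mul, mul_comm, ← mul_assoc, ← det_mul, h2, det_one, one_mul]

lemma charpoly_diag_roots {n : ℕ} (d : Fin n → ℝ) :
    (Matrix.diagonal d).charpoly.roots = Finset.univ.val.map d := by
  have h1 : charmatrix (Matrix.diagonal d) =
      Matrix.diagonal (fun i => (X : ℝ[X]) - C (d i)) := by
    unfold charmatrix
    rw [RingHom.mapMatrix_apply, Matrix.diagonal_map (map_zero C)]
    rw [show Matrix.scalar (Fin n) (X : ℝ[X]) = Matrix.diagonal (fun _ => (X:ℝ[X])) from rfl,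
      Matrix.diagonal_sub]
  rw [Matrix.charpoly, h1, det_diagonal]
  have h2 : ∏ i, ((X : ℝ[X]) - C (d i)) =
      ((Finset.univ.val.map d).map (fun a => (X : ℝ[X]) - C a)).prod := by
    rw [Multiset.map_map]
    rfl
  rw [h2, Polynomial.roots_multiset_prod_X_sub_C]

lemma herm_roots {n : ℕ} (A : Matrix (Fin n) (Fin n) ℝ) (hH : A.IsHermitian) :
    A.charpoly.roots = Finset.univ.val.map hH.eigenvalues := by
  have hst := hH.spectral_theorem
  have hcoe : (RCLike.ofReal ∘ hH.eigenvalues : Fin n → ℝ) = hH.eigenvalues := by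
    funext i; simp [RCLike.ofReal_real_eq_id]
  rw [hcoe] at hst
  have hU1 : (hH.eigenvectorUnitary : Matrix (Fin n) (Fin n) ℝ) *
      (star (hH.eigenvectorUnitary : Matrix (Fin n) (Fin n) ℝ)) = 1 := by
    simpa using (Matrix.mem_unitaryGroup_iff).mp hH.eigenvectorUnitary.2
  have hU2 : (star (hH.eigenvectorUnitary : Matrix (Fin n) (Fin n) ℝ)) *
      (hH.eigenvectorUnitary : Matrix (Fin n) (Fin n) ℝ) = 1 := by
    simpa using (Matrix.mem_unitaryGroup_iff').mp hH.eigenvectorUnitary.2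
  have : A.charpoly = (Matrix.diagonal hH.eigenvalues).charpoly := by
    conv_lhs => rw [hst]
    exact charpoly_conj_aux _ _ _ hU1 hU2
  rw [this, charpoly_diag_roots]

lemma card_le_aux {n : ℕ} {ι κ : Type*} [Fintype ι] [Fintype κ]
    (φ : EuclideanSpace ℝ (Fin n) →ₗ[ℝ] (κ → ℝ)) (hφ : Function.Surjective φ)
    (v : ι → EuclideanSpace ℝ (Fin n)) (li : LinearIndependent ℝ v)
    (hv : ∀ i, φ (v i) = 0) : Fintype.card ι + Fintype.card κ ≤ n := by
  have hker : ∀ i, v i ∈ LinearMap.ker φ := fun i => hv i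
  have li2 : LinearIndependent ℝ (fun i => (⟨v i, hker i⟩ : LinearMap.ker φ)) := by
    apply LinearIndependent.of_comp (LinearMap.ker φ).subtype
    exact li
  have h1 : Fintype.card ι ≤ Module.finrank ℝ (LinearMap.ker φ) :=
    li2.fintype_card_le_finrank
  have h2 := LinearMap.finrank_range_add_finrank_ker φ
  rw [LinearMap.range_eq_top.2 hφ, finrank_top, Module.finrank_fintype_fun_eq_card] at h2
  have h3 : Module.finrank ℝ (EuclideanSpace ℝ (Fin n)) = n := by
    simp [finrank_euclideanSpace]
  rw [h3] at h2
  omega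

end AuxLemmas

/-- `A` is a generalized Laplacian matrix for the graph `G`. -/
def IsGenLap {n : ℕ} (G : SimpleGraph (Fin n)) (A : Matrix (Fin n) (Fin n) ℝ) : Prop :=
  A.IsSymm ∧
  (∀ i j, G.Adj i j → A i j < 0) ∧
  (∀ i j, i ≠ j → ¬ G.Adj i j → A i j = 0) ∧
  (∀ i, ∑ j, A i j = 0)

/-- The star `K_{1,n-1}` on vertex set `Fin n`, with center `0`. -/
def starGraph (n : ℕ) : SimpleGraph (Fin n) where
  Adj i j := i ≠ j ∧ (i.val = 0 ∨ j.val = 0)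
  symm := by
    constructor
    intro i j h
    exact ⟨Ne.symm h.1, h.2.symm⟩
  loopless := by
    constructor
    intro i h
    exact h.1 rfl

instance (n : ℕ) : DecidableRel (starGraph n).Adj := fun i j =>
  inferInstanceAs (Decidable (i ≠ j ∧ (i.val = 0 ∨ j.val = 0)))

/-- For `n ≥ 4`, the only generalized Laplacian matrix of the star `K_{1,n-1}` with
spectrum `{0, λ^(n-2), μ}` where `0 < λ < μ` is `λ·L`, with `L` the combinatorial
Laplacian matrix of the star; in that case `μ = λn`. -/
theorem stmt13 (n : ℕ) (hn : 4 ≤ n) (lam mu : ℝ) (hlam : 0 < lam) (hlm : lam < mu)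
    (A : Matrix (Fin n) (Fin n) ℝ) (hA : IsGenLap (starGraph n) A)
    (hspec : A.charpoly.roots = 0 ::ₘ mu ::ₘ Multiset.replicate (n - 2) lam) :
    A = lam • ((starGraph n).lapMatrix ℝ) ∧ mu = lam * n := by
  haveI : NeZero n := ⟨by omega⟩
  obtain ⟨hsymm, hneg, hzero, hsum⟩ := hA
  have hH : A.IsHermitian := by
    rwa [Matrix.IsHermitian, conjTranspose_eq_transpose_of_trivial]
  have hroots : Finset.univ.val.map hH.eigenvalues
      = 0 ::ₘ mu ::ₘ Multiset.replicate (n - 2) lam := by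
    rw [← herm_roots A hH]; exact hspec
  have hv0 : ∀ i : Fin n, i.val = 0 ↔ i = 0 := by
    intro i; exact ⟨fun h => Fin.ext h, fun h => by simp [h]⟩
  have hadj : ∀ i : Fin n, i ≠ 0 → (starGraph n).Adj 0 i :=
    fun i hi => ⟨fun h => hi h.symm, Or.inl rfl⟩
  have hnadj : ∀ i j : Fin n, i ≠ 0 → j ≠ 0 → ¬ (starGraph n).Adj i j := by
    rintro i j hi hj ⟨hne, h | h⟩
    · exact hi ((hv0 i).1 h)
    · exact hj ((hv0 j).1 h)
  have hsym' : ∀ i j, A i j = A j i := by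
    intro i j
    have := congrFun (congrFun hsymm j) i
    simpa [Matrix.transpose_apply] using this
  have hoffd : ∀ i j : Fin n, i ≠ 0 → j ≠ 0 → i ≠ j → A i j = 0 :=
    fun i j hi hj hij => hzero i j hij (hnadj i j hi hj)
  have hneg0 : ∀ i : Fin n, i ≠ 0 → A 0 i < 0 := fun i hi => hneg 0 i (hadj i hi)
  have hdiag : ∀ i : Fin n, i ≠ 0 → A i 0 + A i i = 0 := by
    intro i hi
    have h1 : ∑ j ∈ ({0, i} : Finset (Fin n)), A i j = ∑ j, A i j := by
      apply Finset.sum_subset (Finset.subset_univ _)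
      intro j _ hj
      simp only [Finset.mem_insert, Finset.mem_singleton, not_or] at hj
      exact hoffd i j hi hj.1 (fun h => hj.2 h.symm)
    rw [Finset.sum_pair (Ne.symm hi)] at h1
    rw [h1, hsum i]
  -- eigen-equation rows
  have hrow : ∀ (v : Fin n → ℝ), A *ᵥ v = lam • v → ∀ j : Fin n, j ≠ 0 →
      A j 0 * v 0 + A j j * v j = lam * v j := by
    intro v hv j hj
    have h1 : ∑ k, A j k * v k = lam * v j := by
      have := congrFun hv j
      simpa [Matrix.mulVec, dotProduct] using this
    rw [← h1]
    have h2 : ∑ k ∈ ({0, j} : Finset (Fin n)), A j k * v k = ∑ k, A j k * v k := by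
      apply Finset.sum_subset (Finset.subset_univ _)
      intro k _ hk
      simp only [Finset.mem_insert, Finset.mem_singleton, not_or] at hk
      rw [hoffd j k hj hk.1 (fun h => hk.2 h.symm), zero_mul]
    rw [← h2, Finset.sum_pair (Ne.symm hj)]
  have hrow0 : ∀ (v : Fin n → ℝ), A *ᵥ v = lam • v →
      ∑ k, A 0 k * v k = lam * v 0 := by
    intro v hv
    have := congrFun hv 0
    simpa [Matrix.mulVec, dotProduct] using this
  -- the lam-eigenvectors
  have hcard : Fintype.card {i : Fin n // lam = hH.eigenvalues i} = n - 2 := by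
    have h1 : Multiset.count lam (Finset.univ.val.map hH.eigenvalues) = n - 2 := by
      rw [hroots, Multiset.count_cons_of_ne hlam.ne', Multiset.count_cons_of_ne hlm.ne,
        Multiset.count_replicate_self]
    rw [Multiset.count_map] at h1
    rw [Fintype.card_subtype]
    simpa [Finset.card, Finset.filter] using h1
  set w : {i : Fin n // lam = hH.eigenvalues i} → EuclideanSpace ℝ (Fin n) :=
    fun s => hH.eigenvectorBasis s.val with hw
  have hwli : LinearIndependent ℝ w := by
    have := (hH.eigenvectorBasis.toBasis.linearIndependent).comp
      (Subtype.val : {i : Fin n // lam = hH.eigenvalues i} → Fin n) Subtype.val_injective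
    exact this
  have hweig : ∀ s, A *ᵥ (w s : Fin n → ℝ) = lam • (w s : Fin n → ℝ) := by
    intro s
    have := hH.mulVec_eigenvectorBasis s.val
    rw [← s.2] at this
    exact this
  -- key claim
  have hkey : ∀ j : Fin n, j ≠ 0 → A j j = lam := by
    by_contra hc
    push_neg at hc
    obtain ⟨j₀, hj₀, hj₀ne⟩ := hc
    by_cases hex : ∃ i₀ : Fin n, i₀ ≠ 0 ∧ A i₀ i₀ = lam
    · obtain ⟨i₀, hi₀, hi₀eq⟩ := hex
      have hij : i₀ ≠ j₀ := fun h => hj₀ne (h ▸ hi₀eq)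
      have hA0i₀ : A 0 i₀ ≠ 0 := (hneg0 i₀ hi₀).ne
      -- the linear map
      set φ : EuclideanSpace ℝ (Fin n) →ₗ[ℝ] (Fin 3 → ℝ) :=
        { toFun := fun x => ![x 0, x j₀, ∑ k, A 0 k * x k]
          map_add' := by
            intro x y
            funext i
            fin_cases i <;>
              simp [Finset.sum_add_distrib, mul_add]
          map_smul' := by
            intro c x
            funext i
            fin_cases i <;>
              simp [Finset.mul_sum, mul_comm, mul_left_comm, mul_assoc] } with hφ
      have hφsurj : Function.Surjective φ := by
        intro y
        set t : ℝ := (y 2 - A 0 0 * y 0 - A 0 j₀ * y 1) / (A 0 i₀) with ht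
        refine ⟨WithLp.toLp 2 (fun k => if k = 0 then y 0 else if k = j₀ then y 1
          else if k = i₀ then t else 0 : Fin n → ℝ), ?_⟩
        have hs : ∑ k, A 0 k * (if k = 0 then y 0 else if k = j₀ then y 1
            else if k = i₀ then t else 0) = y 2 := by
          rw [Finset.sum_eq_add_sum_sdiff_singleton_of_mem (Finset.mem_univ 0)]
          rw [Finset.sum_eq_add_sum_sdiff_singleton_of_mem
            (by simp [Finset.mem_sdiff, hj₀] : j₀ ∈ Finset.univ \ {0})]
          rw [Finset.sum_eq_add_sum_sdiff_singleton_of_mem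
            (by simp [Finset.mem_sdiff, hi₀, hij] : i₀ ∈ (Finset.univ \ {0}) \ {j₀})]
          have hz : ∑ k ∈ ((Finset.univ \ {0}) \ {j₀}) \ {i₀},
              A 0 k * (if k = 0 then y 0 else if k = j₀ then y 1
                else if k = i₀ then t else 0) = 0 := by
            apply Finset.sum_eq_zero
            intro k hk
            simp only [Finset.mem_sdiff, Finset.mem_singleton, Finset.mem_univ,
              true_and] at hk
            obtain ⟨⟨hk0, hkj⟩, hki⟩ := hk
            rw [if_neg hk0, if_neg hkj, if_neg hki, mul_zero]
          rw [hz]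
          simp only [if_pos rfl, if_neg hj₀, if_neg hi₀, if_neg hij, if_true]
          rw [ht]
          field_simp
          ring
        funext i
        fin_cases i
        · simp [hφ]
        · simp [hφ, Ne.symm hj₀, hj₀]
        · simpa [hφ] using hs
      have hker : ∀ s, φ (w s) = 0 := by
        intro s
        have h0 : (w s : Fin n → ℝ) 0 = 0 := by
          have h1 := hrow (w s) (hweig s) i₀ hi₀
          rw [hi₀eq, hsym' i₀ 0] at h1
          have h2 : A 0 i₀ * (w s : Fin n → ℝ) 0 = 0 := by linarith
          exact (mul_eq_zero.1 h2).resolve_left hA0i₀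
        have hj : (w s : Fin n → ℝ) j₀ = 0 := by
          have := hrow (w s) (hweig s) j₀ hj₀
          rw [h0, mul_zero, zero_add] at this
          have h2 : (A j₀ j₀ - lam) * (w s : Fin n → ℝ) j₀ = 0 := by ring_nf; linarith
          exact (mul_eq_zero.1 h2).resolve_left (sub_ne_zero.2 hj₀ne)
        have hsumk : ∑ k, A 0 k * (w s : Fin n → ℝ) k = 0 := by
          rw [hrow0 (w s) (hweig s), h0, mul_zero]
        funext i
        fin_cases i <;> simp [hφ, h0, hj, hsumk]
      have := card_le_aux φ hφsurj w hwli hker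
      rw [hcard] at this
      simp only [Fintype.card_fin] at this
      omega
    · push_neg at hex
      set φ : EuclideanSpace ℝ (Fin n) →ₗ[ℝ] ({i : Fin n // i ≠ 0} → ℝ) :=
        { toFun := fun x => fun j => (A j.val j.val - lam) * x j.val + A j.val 0 * x 0
          map_add' := by intro x y; funext j; simp; ring
          map_smul' := by intro c x; funext j; simp; ring } with hφ
      have hφsurj : Function.Surjective φ := by
        intro y
        refine ⟨WithLp.toLp 2 (fun k => if h : k = 0 then 0 else y ⟨k, h⟩ / (A k k - lam) : Fin n → ℝ), ?_⟩
        funext j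
        have hne : A j.val j.val - lam ≠ 0 := sub_ne_zero.2 (hex j.val j.2)
        simp only [hφ, LinearMap.coe_mk, AddHom.coe_mk, PiLp.toLp_apply, dif_neg j.2]
        rw [dif_pos trivial, mul_zero, add_zero, mul_comm, div_mul_cancel₀ _ hne]
      have hker : ∀ s, φ (w s) = 0 := by
        intro s
        funext j
        have := hrow (w s) (hweig s) j.val j.2
        simp only [hφ, LinearMap.coe_mk, AddHom.coe_mk, Pi.zero_apply]
        ring_nf
        ring_nf at this
        linarith
      have := card_le_aux φ hφsurj w hwli hker
      rw [hcard] at this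
      have hcard2 : Fintype.card {i : Fin n // i ≠ 0} = n - 1 := by
        simp [Fintype.card_subtype_compl]
      rw [hcard2] at this
      omega
  -- entries of A
  have hA0j : ∀ j : Fin n, j ≠ 0 → A 0 j = -lam := by
    intro j hj
    have h1 := hdiag j hj
    rw [hkey j hj] at h1
    rw [hsym' 0 j]
    linarith
  have hA00 : A 0 0 = ((n - 1 : ℕ) : ℝ) * lam := by
    have h1 := hsum 0
    rw [← Finset.add_sum_erase Finset.univ _ (Finset.mem_univ 0)] at h1
    have h2 : ∑ j ∈ Finset.univ.erase 0, A 0 j = ((n - 1 : ℕ) : ℝ) * (-lam) := by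
      rw [Finset.sum_congr rfl (fun j hj => hA0j j (Finset.mem_erase.1 hj).1)]
      rw [Finset.sum_const, Finset.card_erase_of_mem (Finset.mem_univ 0), Finset.card_univ,
        Fintype.card_fin, nsmul_eq_mul]
    rw [h2] at h1
    linarith
  -- degrees
  have hdeg0 : (starGraph n).degree 0 = n - 1 := by
    have h1 : (starGraph n).neighborFinset 0 = Finset.univ.erase 0 := by
      ext k
      simp only [SimpleGraph.mem_neighborFinset, Finset.mem_erase, Finset.mem_univ, and_true]
      constructor
      · rintro ⟨hne, _⟩; exact fun h => hne h.symm
      · intro hk; exact hadj k hk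
    rw [SimpleGraph.degree, h1, Finset.card_erase_of_mem (Finset.mem_univ 0),
      Finset.card_univ, Fintype.card_fin]
  have hdegj : ∀ j : Fin n, j ≠ 0 → (starGraph n).degree j = 1 := by
    intro j hj
    have h1 : (starGraph n).neighborFinset j = {0} := by
      ext k
      simp only [SimpleGraph.mem_neighborFinset, Finset.mem_singleton]
      constructor
      · rintro ⟨hne, h | h⟩
        · exact absurd ((hv0 j).1 h) hj
        · exact (hv0 k).1 h
      · intro hk
        subst hk
        exact ((starGraph n).adj_symm (hadj j hj))
    rw [SimpleGraph.degree, h1, Finset.card_singleton]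
  constructor
  · ext i j
    rw [Matrix.smul_apply, SimpleGraph.lapMatrix, Matrix.sub_apply, smul_eq_mul]
    by_cases hi : i = 0 <;> by_cases hj : j = 0
    · subst hi; subst hj
      rw [SimpleGraph.degMatrix, SimpleGraph.adjMatrix]
      simp only [Matrix.of_apply, Matrix.diagonal_apply_eq]
      rw [if_neg ((starGraph n).irrefl (v := 0)), hA00, hdeg0]
      ring
    · subst hi
      rw [SimpleGraph.degMatrix, SimpleGraph.adjMatrix]
      simp only [Matrix.of_apply, Matrix.diagonal_apply_ne _ (Ne.symm hj)]
      rw [if_pos (hadj j hj), hA0j j hj]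
      ring
    · subst hj
      rw [SimpleGraph.degMatrix, SimpleGraph.adjMatrix]
      simp only [Matrix.of_apply, Matrix.diagonal_apply_ne _ hi]
      rw [if_pos ((starGraph n).adj_symm (hadj i hi)), hsym' i 0, hA0j i hi]
      ring
    · by_cases hij : i = j
      · subst hij
        rw [SimpleGraph.degMatrix, SimpleGraph.adjMatrix]
        simp only [Matrix.of_apply, Matrix.diagonal_apply_eq]
        rw [if_neg ((starGraph n).irrefl (v := i)), hkey i hi, hdegj i hi]
        ring
      · rw [SimpleGraph.degMatrix, SimpleGraph.adjMatrix]
        simp only [Matrix.of_apply, Matrix.diagonal_apply_ne _ hij]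
        rw [if_neg (hnadj i j hi hj), hoffd i j hi hj hij]
        ring
  · -- trace identity
    have hnd : A.charpoly.natDegree = n := by
      rw [Matrix.charpoly_natDegree_eq_dim, Fintype.card_fin]
    have hsplits : A.charpoly.Splits := by
      rw [Polynomial.splits_iff_card_roots, hspec, hnd]
      simp only [Multiset.card_cons, Multiset.card_replicate]
      omega
    have htr := Matrix.trace_eq_sum_roots_charpoly_of_splits hsplits
    rw [hspec] at htr
    have htr2 : A.trace = 2 * ((n - 1 : ℕ) : ℝ) * lam := by
      rw [Matrix.trace]
      simp only [Matrix.diag_apply]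
      rw [← Finset.add_sum_erase Finset.univ _ (Finset.mem_univ 0)]
      have h2 : ∑ j ∈ Finset.univ.erase 0, A j j = ((n - 1 : ℕ) : ℝ) * lam := by
        rw [Finset.sum_congr rfl (fun j hj => hkey j (Finset.mem_erase.1 hj).1)]
        rw [Finset.sum_const, Finset.card_erase_of_mem (Finset.mem_univ 0), Finset.card_univ,
          Fintype.card_fin, nsmul_eq_mul]
      rw [hA00, h2]
      ring
    rw [htr2] at htr
    simp only [Multiset.sum_cons, Multiset.sum_replicate, nsmul_eq_mul, zero_add] at htr
    have hc1 : ((n - 1 : ℕ) : ℝ) = (n : ℝ) - 1 := by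
      rw [Nat.cast_sub (by omega)]; norm_num
    have hc2 : ((n - 2 : ℕ) : ℝ) = (n : ℝ) - 2 := by
      rw [Nat.cast_sub (by omega)]; norm_num
    rw [hc1] at htr
    rw [hc2] at htr
    linarith
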